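/- Let τ : [0,∞) → [0, τ̄] be measurable and v ∈ L²[0,∞) (extended by zero to negative times). Define w(t) := v(t - τ(t)) - v(t) and y(t) := ∫₀^t u(s) ds for u ∈ L²[0,∞), so that w = S(y) when v = y. Then ‖S ∘ ∫‖ ≤ τ̄: explicitly, if w(t) = y(t-τ(t)) - y(t) = -∫_{t-τ(t)}^{t} u(s) ds, then ∫₀^∞ w(t)² dt ≤ τ̄² ∫₀^∞ u(t)² dt. -/

import Mathlib

open MeasureTheory

lemma cs_aux {a b : ℝ} (hab : a ≤ b) {u : ℝ → ℝ}
    (h1 : IntegrableOn u (Set.Ioc a b))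
    (h2 : IntegrableOn (fun s => u s ^ 2) (Set.Ioc a b)) :
    (∫ s in Set.Ioc a b, u s) ^ 2 ≤ (b - a) * ∫ s in Set.Ioc a b, u s ^ 2 := by
  set c : ℝ := b - a with hc
  set I : ℝ := ∫ s in Set.Ioc a b, u s with hI
  set Q : ℝ := ∫ s in Set.Ioc a b, u s ^ 2 with hQ
  rcases eq_or_lt_of_le hab with h | h
  · subst h
    simp [hI, hQ]
  have hcpos : 0 < c := by simp [hc]; linarith
  have hmeas : (volume (Set.Ioc a b)).toReal = c := by
    rw [Real.volume_Ioc, ENNReal.toReal_ofReal (by linarith)]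
  have key : 0 ≤ ∫ s in Set.Ioc a b, (c * u s - I) ^ 2 :=
    integral_nonneg fun s => sq_nonneg _
  have expand : (fun s => (c * u s - I) ^ 2)
      = fun s => (c ^ 2 * u s ^ 2 - (2 * c * I) * u s) + I ^ 2 := by
    funext s; ring
  rw [expand] at key
  have e1 : (∫ s in Set.Ioc a b, ((c ^ 2 * u s ^ 2 - (2 * c * I) * u s) + I ^ 2))
      = ((∫ s in Set.Ioc a b, (c ^ 2 * u s ^ 2 - (2 * c * I) * u s))
        + ∫ _ in Set.Ioc a b, (I ^ 2 : ℝ)) :=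
    integral_add ((h2.const_mul (c ^ 2)).sub (h1.const_mul (2 * c * I)))
      (integrableOn_const (by rw [Real.volume_Ioc]; exact ENNReal.ofReal_ne_top))
  have e2 : (∫ s in Set.Ioc a b, (c ^ 2 * u s ^ 2 - (2 * c * I) * u s))
      = (∫ s in Set.Ioc a b, c ^ 2 * u s ^ 2) - ∫ s in Set.Ioc a b, (2 * c * I) * u s :=
    integral_sub (h2.const_mul (c ^ 2)) (h1.const_mul (2 * c * I))
  rw [e1, e2, MeasureTheory.integral_const_mul, MeasureTheory.integral_const_mul, setIntegral_const, measureReal_def, hmeas] at key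
  have key2 : 0 ≤ c ^ 2 * Q - c * I ^ 2 := by
    have hs : c • I ^ 2 = c * I ^ 2 := rfl
    rw [hs] at key
    nlinarith [key]
  nlinarith [key2, hcpos]

/-- Kao–Rantzer bound `‖S_{τ̄,r} ∘ 1/s‖ ≤ τ̄`: if `τ(t) ∈ [0, τ̄]` and
`w(t) = -∫_{t-τ(t)}^t u(s) ds` (with `u` extended by zero to negative times),
then `∫₀^∞ w(t)² dt ≤ τ̄² ∫₀^∞ u(t)² dt`. -/
theorem delay_integrator_gain_bound (τbar : ℝ) (hτbar : 0 ≤ τbar)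
    (τ : ℝ → ℝ) (hτmeas : Measurable τ)
    (hτ : ∀ t, τ t ∈ Set.Icc (0 : ℝ) τbar)
    (u : ℝ → ℝ) (hu0 : ∀ s < (0 : ℝ), u s = 0)
    (hu : Integrable (fun t => (u t) ^ 2) (volume.restrict (Set.Ioi (0 : ℝ)))) :
    (∫ t in Set.Ioi (0 : ℝ), (-(∫ s in (t - τ t)..t, u s)) ^ 2)
      ≤ τbar ^ 2 * ∫ t in Set.Ioi (0 : ℝ), (u t) ^ 2 := by
  -- a.e. nonzero points
  have hne : ∀ᵐ (s : ℝ), s ≠ (0 : ℝ) := by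
    rw [ae_iff]
    simpa using measure_singleton (0 : ℝ)
  -- a measurable a.e. representative of u² that is globally correct
  set g : ℝ → ℝ := hu.1.mk _ with hgdef
  have hg : Measurable g := hu.1.stronglyMeasurable_mk.measurable
  set G : ℝ → ℝ := Set.indicator (Set.Ioi (0 : ℝ)) (fun s => max (g s) 0) with hGdef
  have hGmeas : Measurable G := (hg.max measurable_const).indicator measurableSet_Ioi
  have hGnn : ∀ s, 0 ≤ G s :=
    fun s => Set.indicator_nonneg (fun s _ => le_max_right _ _) s
  have hUG : (fun s => u s ^ 2) =ᵐ[volume] G := by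
    have h1 : ∀ᵐ s, s ∈ Set.Ioi (0 : ℝ) → u s ^ 2 = g s :=
      (ae_restrict_iff' measurableSet_Ioi).mp hu.1.ae_eq_mk
    filter_upwards [h1, hne] with s hs hs0
    by_cases hspos : s ∈ Set.Ioi (0 : ℝ)
    · rw [hGdef]
      simp only [Set.indicator_of_mem hspos]
      rw [← hs hspos, max_eq_left (by positivity)]
    · have hneg : s < 0 := by
        rcases lt_trichotomy s 0 with h | h | h
        · exact h
        · exact absurd h hs0
        · exact absurd h hspos
      rw [hGdef]
      simp [Set.indicator_of_notMem hspos, hu0 s hneg]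
  -- u² is integrable on every Ioc
  have intOn : ∀ a b : ℝ, IntegrableOn (fun s => u s ^ 2) (Set.Ioc a b) volume := by
    intro a b
    have hsplit : Set.Ioc a b = (Set.Ioc a b ∩ Set.Iic 0) ∪ (Set.Ioc a b ∩ Set.Ioi 0) := by
      rw [← Set.inter_union_distrib_left, Set.Iic_union_Ioi, Set.inter_univ]
    rw [hsplit]
    apply IntegrableOn.union
    · refine Integrable.congr (integrable_zero _ _ _) ?_
      have h0 : ∀ᵐ s, s ∈ Set.Ioc a b ∩ Set.Iic 0 → (0 : ℝ) = u s ^ 2 := by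
        filter_upwards [hne] with s hs0 hmem
        have : s < 0 := lt_of_le_of_ne hmem.2 hs0
        rw [hu0 s this]; ring
      exact (ae_restrict_iff' (measurableSet_Ioc.inter measurableSet_Iic)).mpr h0
    · exact IntegrableOn.mono_set hu Set.inter_subset_right
  set L : ℝ → ENNReal := fun s => ENNReal.ofReal (G s) with hLdef
  have hLmeas : Measurable L := ENNReal.measurable_ofReal.comp hGmeas
  have hLzero : ∀ s, s ∉ Set.Ioi (0 : ℝ) → L s = 0 := by
    intro s hs
    rw [hLdef]
    simp [hGdef, Set.indicator_of_notMem hs]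
  -- pointwise Cauchy–Schwarz bound
  have claim : ∀ t ∈ Set.Ioi (0 : ℝ),
      ENNReal.ofReal ((-(∫ s in (t - τ t)..t, u s)) ^ 2)
        ≤ ENNReal.ofReal τbar * ∫⁻ s in Set.Ioc (t - τbar) t, L s := by
    intro t _
    rw [neg_pow]
    simp only [Even.neg_one_pow (by norm_num : Even 2), one_mul]
    by_cases hInt : IntervalIntegrable u volume (t - τ t) t
    · have hle : t - τ t ≤ t := by have := (hτ t).1; linarith
      rw [intervalIntegral.integral_of_le hle]
      have h1 : IntegrableOn u (Set.Ioc (t - τ t) t) := hInt.1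
      have hcs := cs_aux hle h1 (intOn (t - τ t) t)
      have hQnn : 0 ≤ ∫ s in Set.Ioc (t - τ t) t, u s ^ 2 :=
        integral_nonneg fun s => sq_nonneg _
      have hsub : Set.Ioc (t - τ t) t ⊆ Set.Ioc (t - τbar) t :=
        Set.Ioc_subset_Ioc_left (by linarith [(hτ t).2])
      have hmono : (∫ s in Set.Ioc (t - τ t) t, u s ^ 2)
          ≤ ∫ s in Set.Ioc (t - τbar) t, u s ^ 2 :=
        setIntegral_mono_set (intOn _ _)
          (Filter.Eventually.of_forall fun s => sq_nonneg _) hsub.eventuallyLE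
      have step : (∫ s in Set.Ioc (t - τ t) t, u s) ^ 2
          ≤ τbar * ∫ s in Set.Ioc (t - τbar) t, u s ^ 2 := by
        calc (∫ s in Set.Ioc (t - τ t) t, u s) ^ 2
            ≤ (t - (t - τ t)) * ∫ s in Set.Ioc (t - τ t) t, u s ^ 2 := hcs
          _ = τ t * ∫ s in Set.Ioc (t - τ t) t, u s ^ 2 := by ring_nf
          _ ≤ τbar * ∫ s in Set.Ioc (t - τbar) t, u s ^ 2 :=
              mul_le_mul (hτ t).2 hmono hQnn hτbar
      calc ENNReal.ofReal ((∫ s in Set.Ioc (t - τ t) t, u s) ^ 2)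
          ≤ ENNReal.ofReal (τbar * ∫ s in Set.Ioc (t - τbar) t, u s ^ 2) :=
            ENNReal.ofReal_le_ofReal step
        _ = ENNReal.ofReal τbar
            * ENNReal.ofReal (∫ s in Set.Ioc (t - τbar) t, u s ^ 2) :=
            ENNReal.ofReal_mul hτbar
        _ = ENNReal.ofReal τbar * ∫⁻ s in Set.Ioc (t - τbar) t, ENNReal.ofReal (u s ^ 2) := by
            rw [ofReal_integral_eq_lintegral_ofReal (intOn _ _)
              (Filter.Eventually.of_forall fun s => sq_nonneg _)]
        _ = ENNReal.ofReal τbar * ∫⁻ s in Set.Ioc (t - τbar) t, L s := by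
            congr 1
            refine lintegral_congr_ae (ae_restrict_of_ae ?_)
            filter_upwards [hUG] with s hs
            rw [hs]
    · rw [intervalIntegral.integral_undef hInt]
      simp
  -- Tonelli step
  have hSmeas : MeasurableSet {p : ℝ × ℝ | p.1 - τbar < p.2 ∧ p.2 ≤ p.1} := by
    apply MeasurableSet.inter
    · exact measurableSet_lt (measurable_fst.sub measurable_const) measurable_snd
    · exact measurableSet_le measurable_snd measurable_fst
  have huncurry : (Function.uncurry fun t s => (Set.Ioc (t - τbar) t).indicator L s)
      = Set.indicator {p : ℝ × ℝ | p.1 - τbar < p.2 ∧ p.2 ≤ p.1} (fun p => L p.2) := by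
    funext p
    simp only [Function.uncurry, Set.indicator_apply, Set.mem_Ioc, Set.mem_setOf_eq]
  have hfmeas : Measurable (Function.uncurry fun t s => (Set.Ioc (t - τbar) t).indicator L s) := by
    rw [huncurry]
    exact (hLmeas.comp measurable_snd).indicator hSmeas
  have swap : (∫⁻ t in Set.Ioi (0 : ℝ), ∫⁻ s, (Set.Ioc (t - τbar) t).indicator L s)
      = ∫⁻ s, ∫⁻ t in Set.Ioi (0 : ℝ), (Set.Ioc (t - τbar) t).indicator L s :=
    lintegral_lintegral_swap hfmeas.aemeasurable
  have hswitch : ∀ s t : ℝ, (Set.Ioc (t - τbar) t).indicator L s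
      = (Set.Ico s (s + τbar)).indicator (fun _ => L s) t := by
    intro s t
    simp only [Set.indicator_apply, Set.mem_Ioc, Set.mem_Ico]
    have : (t - τbar < s ∧ s ≤ t) = (s ≤ t ∧ t < s + τbar) := by
      apply propext
      constructor <;> rintro ⟨h1, h2⟩ <;> exact ⟨by linarith, by linarith⟩
    exact if_congr (iff_of_eq this) rfl rfl
  have hLtotal : (∫⁻ s, L s) = ∫⁻ s in Set.Ioi (0 : ℝ), L s := by
    have hind : (Set.Ioi (0 : ℝ)).indicator L = L := by
      apply Set.indicator_eq_self.mpr
      intro s hs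
      by_contra hsmem
      exact hs (hLzero s hsmem)
    rw [← lintegral_indicator measurableSet_Ioi L, hind]
  have hLval : (∫⁻ s in Set.Ioi (0 : ℝ), L s)
      = ENNReal.ofReal (∫ t in Set.Ioi (0 : ℝ), u t ^ 2) := by
    rw [ofReal_integral_eq_lintegral_ofReal hu
      (Filter.Eventually.of_forall fun s => sq_nonneg _)]
    refine lintegral_congr_ae (ae_restrict_of_ae ?_)
    filter_upwards [hUG] with s hs
    rw [hLdef]
    simp only
    rw [← hs]
  have hRHSnn : (0 : ℝ) ≤ ∫ t in Set.Ioi (0 : ℝ), u t ^ 2 :=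
    integral_nonneg fun t => sq_nonneg _
  by_cases hW : Integrable (fun t => (-(∫ s in (t - τ t)..t, u s)) ^ 2)
      (volume.restrict (Set.Ioi (0 : ℝ)))
  · rw [integral_eq_lintegral_of_nonneg_ae
      (Filter.Eventually.of_forall fun t => sq_nonneg _) hW.1]
    apply ENNReal.toReal_le_of_le_ofReal (by positivity)
    have main : (∫⁻ t in Set.Ioi (0 : ℝ), ENNReal.ofReal ((-(∫ s in (t - τ t)..t, u s)) ^ 2))
        ≤ ENNReal.ofReal τbar * (ENNReal.ofReal τbar
            * ENNReal.ofReal (∫ t in Set.Ioi (0 : ℝ), u t ^ 2)) := by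
      calc (∫⁻ t in Set.Ioi (0 : ℝ), ENNReal.ofReal ((-(∫ s in (t - τ t)..t, u s)) ^ 2))
          ≤ ∫⁻ t in Set.Ioi (0 : ℝ),
              (ENNReal.ofReal τbar * ∫⁻ s in Set.Ioc (t - τbar) t, L s) :=
            lintegral_mono_ae ((ae_restrict_iff' measurableSet_Ioi).mpr
              (Filter.Eventually.of_forall claim))
        _ = ENNReal.ofReal τbar
            * ∫⁻ t in Set.Ioi (0 : ℝ), ∫⁻ s in Set.Ioc (t - τbar) t, L s :=
            lintegral_const_mul' _ _ ENNReal.ofReal_ne_top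
        _ = ENNReal.ofReal τbar
            * ∫⁻ t in Set.Ioi (0 : ℝ), ∫⁻ s, (Set.Ioc (t - τbar) t).indicator L s := by
            congr 1
            exact lintegral_congr fun t => (lintegral_indicator measurableSet_Ioc L).symm
        _ = ENNReal.ofReal τbar
            * ∫⁻ s, ∫⁻ t in Set.Ioi (0 : ℝ), (Set.Ioc (t - τbar) t).indicator L s := by
            rw [swap]
        _ ≤ ENNReal.ofReal τbar * ∫⁻ s, L s * ENNReal.ofReal τbar := by
            gcongr with s
            calc (∫⁻ t in Set.Ioi (0 : ℝ), (Set.Ioc (t - τbar) t).indicator L s)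
                = ∫⁻ t in Set.Ioi (0 : ℝ), (Set.Ico s (s + τbar)).indicator (fun _ => L s) t :=
                  lintegral_congr fun t => hswitch s t
              _ = L s * (volume.restrict (Set.Ioi (0 : ℝ))) (Set.Ico s (s + τbar)) :=
                  lintegral_indicator_const measurableSet_Ico _
              _ ≤ L s * volume (Set.Ico s (s + τbar)) := by
                  gcongr
                  exact Measure.le_iff'.2 fun _ => Measure.restrict_le_self _
              _ = L s * ENNReal.ofReal τbar := by
                  rw [Real.volume_Ico, add_sub_cancel_left]
        _ = ENNReal.ofReal τbar * (ENNReal.ofReal τbar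
            * ENNReal.ofReal (∫ t in Set.Ioi (0 : ℝ), u t ^ 2)) := by
            rw [lintegral_mul_const' _ _ ENNReal.ofReal_ne_top, hLtotal, hLval]
            ring
    calc (∫⁻ t in Set.Ioi (0 : ℝ), ENNReal.ofReal ((-(∫ s in (t - τ t)..t, u s)) ^ 2))
        ≤ ENNReal.ofReal τbar * (ENNReal.ofReal τbar
            * ENNReal.ofReal (∫ t in Set.Ioi (0 : ℝ), u t ^ 2)) := main
      _ = ENNReal.ofReal (τbar ^ 2 * ∫ t in Set.Ioi (0 : ℝ), u t ^ 2) := by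
          rw [pow_two, mul_assoc, ENNReal.ofReal_mul hτbar, ENNReal.ofReal_mul hτbar]
  · rw [integral_undef hW]
    positivity
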